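/- The function t ↦ t·φ₃(t), where φ₃(t) = 1 + t·ln(t/(1 + t)), is nondecreasing on [1, ∞); consequently φ₃(t) ≥ (1 − ln 2)/t for all t ≥ 1. -/

import Mathlib

open Real Set

lemma aux_log_le (y : ℝ) (hy : 1 ≤ y) : Real.log y ≤ (y - 1/y)/2 := by
  have hmono : MonotoneOn (fun y : ℝ => (y - 1/y)/2 - Real.log y) (Ici 1) := by
    have hdiff : ∀ x ∈ Ici (1:ℝ), HasDerivAt (fun y : ℝ => (y - 1/y)/2 - Real.log y)
        ((1 - (-(x^2)⁻¹))/2 - x⁻¹) x := by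
      intro x hx
      have hx0 : x ≠ 0 := by simp at hx; linarith
      have h1 : HasDerivAt (fun y : ℝ => 1/y) (-(x^2)⁻¹) x := by
        simpa [one_div] using hasDerivAt_inv hx0
      have h2 := ((hasDerivAt_id x).sub h1).div_const 2
      exact h2.sub (Real.hasDerivAt_log hx0)
    apply monotoneOn_of_deriv_nonneg (convex_Ici 1)
    · exact fun x hx => ((hdiff x hx).continuousAt).continuousWithinAt
    · intro x hx
      rw [interior_Ici] at hx
      exact ((hdiff x (mem_Ici.mpr (le_of_lt hx))).differentiableAt).differentiableWithinAt
    · intro x hx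
      rw [interior_Ici] at hx
      have hx1 : (1:ℝ) < x := hx
      rw [(hdiff x (mem_Ici.mpr (le_of_lt hx))).deriv]
      have hx0 : (0:ℝ) < x := by linarith
      have h : (1 - (-(x^2)⁻¹))/2 - x⁻¹ = (x-1)^2 / (2*x^2) := by
        field_simp; ring
      rw [h]
      positivity
  have h0 := hmono (self_mem_Ici) hy hy
  simp only [Real.log_one] at h0
  simp only [one_div] at h0 ⊢
  norm_num at h0
  linarith

lemma f_hasDeriv (x : ℝ) (hx : 0 < x) :
    HasDerivAt (fun t : ℝ => t * (1 + t * Real.log (t / (1 + t))))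
      (1 + 2*x*Real.log (x/(1+x)) + x/(1+x)) x := by
  have hx1 : (0:ℝ) < 1 + x := by linarith
  have hxne : x ≠ 0 := ne_of_gt hx
  have hx1ne : (1:ℝ) + x ≠ 0 := ne_of_gt hx1
  have hu : HasDerivAt (fun t : ℝ => t / (1 + t))
      ((1*(1+x) - x*1)/(1+x)^2) x := by
    have := (hasDerivAt_id' x).fun_div ((hasDerivAt_const x 1).fun_add (hasDerivAt_id' x)) hx1ne
    simpa using this
  have huu : x / (1+x) ≠ 0 := div_ne_zero hxne hx1ne
  have hlog := hu.log huu
  have hinner := (((hasDerivAt_id' x).fun_mul hlog).const_add 1)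
  have hf := (hasDerivAt_id' x).fun_mul hinner
  refine hf.congr_deriv ?_
  field_simp
  ring

theorem t_mul_phi3_monotone_and_lower_bound :
    MonotoneOn (fun t : ℝ => t * (1 + t * Real.log (t / (1 + t)))) (Set.Ici 1) ∧
    ∀ t : ℝ, 1 ≤ t →
      1 + t * Real.log (t / (1 + t)) ≥ (1 - Real.log 2) / t := by
  have hmono : MonotoneOn (fun t : ℝ => t * (1 + t * Real.log (t / (1 + t)))) (Set.Ici 1) := by
    apply monotoneOn_of_deriv_nonneg (convex_Ici 1)
    · intro x hx
      have hx0 : (0:ℝ) < x := lt_of_lt_of_le one_pos hx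
      exact (f_hasDeriv x hx0).continuousAt.continuousWithinAt
    · intro x hx
      rw [interior_Ici] at hx
      exact (f_hasDeriv x (by linarith [mem_Ioi.mp hx])).differentiableAt.differentiableWithinAt
    · intro x hx
      rw [interior_Ici] at hx
      have hx1 : (1:ℝ) < x := hx
      have hx0 : (0:ℝ) < x := by linarith
      rw [(f_hasDeriv x hx0).deriv]
      have hy : (1:ℝ) ≤ (1+x)/x := by
        rw [le_div_iff₀ hx0]; linarith
      have hb := aux_log_le ((1+x)/x) hy
      have hlogeq : Real.log (x/(1+x)) = - Real.log ((1+x)/x) := by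
        rw [← Real.log_inv]
        congr 1
        field_simp
      rw [hlogeq]
      have h1x : (0:ℝ) < 1 + x := by linarith
      rw [one_div_div] at hb
      have hb2 : 2*(x*(1+x))*Real.log ((1+x)/x) ≤ 1+2*x := by
        have h2 := mul_le_mul_of_nonneg_left hb (by positivity : (0:ℝ) ≤ 2*(x*(1+x)))
        have heq : 2*(x*(1+x)) * (((1+x)/x - x/(1+x))/2) = 1+2*x := by
          field_simp; ring
        linarith [heq.le, heq.ge]
      have hdiv : x/(1+x) * (1+x) = x := div_mul_cancel₀ x (ne_of_gt h1x)
      nlinarith [hb2, hdiv, h1x]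
  refine ⟨hmono, fun t ht => ?_⟩
  have ht0 : (0:ℝ) < t := lt_of_lt_of_le one_pos ht
  have h := hmono self_mem_Ici ht ht
  have h1 : (1:ℝ) * (1 + 1 * Real.log (1 / (1 + 1))) = 1 - Real.log 2 := by
    have h2 : Real.log ((1:ℝ)/(1+1)) = - Real.log 2 := by
      norm_num
      rw [one_div, Real.log_inv]
    rw [h2]; ring
  have h' : (1:ℝ) * (1 + 1 * Real.log (1 / (1 + 1))) ≤
      t * (1 + t * Real.log (t / (1 + t))) := h
  rw [h1] at h'
  rw [ge_iff_le, div_le_iff₀ ht0]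
  linarith [h', mul_comm t (1 + t * Real.log (t / (1 + t)))]
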